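/- Let k ≥ 1, n ≥ 1, d ≥ 1, α ∈ (0,1], γ ∈ (10/(nα), 1/2), τ := γ/(1 + 2γ), δ ∈ (1/2 − γ/4, 1/2), and D ≥ 0. Let T₁*, …, T_k* be a partition of {1,…,n} with n_h* := |T_h*| ≥ nα for every h, let θ₁, …, θ_k ∈ ℝ^d, and let Y_i = θ_h + w_i for i ∈ T_h*, where w₁, …, w_n are independent ℝ^d-valued random vectors with P[‖w_i‖ > D] ≤ exp(−(1 + 2/α)/τ) for each i. Then with probability at least 1 − e^{−0.3n}, the following holds simultaneously: for every partition T₁, …, T_k of {1,…,n} such that |T_h ∩ T_h*| ≥ (1/2 + γ)·max(|T_h*|, |T_h|) for every h, every trimmed mean θ̂_h = TM_δ((Y_j)_{j ∈ T_h}) satisfies ‖θ̂_h − θ_h‖ ≤ 8D for every h ∈ {1,…,k}. -/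

import Mathlib

open MeasureTheory ProbabilityTheory Filter Finset

set_option maxHeartbeats 1000000

/-- For a finite family of points `(X_j)_{j ∈ T}` with `N = |T|`,
`trimRadius δ T X i` is the smallest `r ≥ 0` such that at least
`⌈(1−δ)N⌉` indices `j ∈ T` satisfy `‖X_j − X_i‖ ≤ r`. -/
noncomputable def trimRadius {ι : Type*} {d : ℕ} (δ : ℝ)
    (T : Finset ι) (X : ι → EuclideanSpace ℝ (Fin d)) (i : ι) : ℝ :=
  sInf {r : ℝ | 0 ≤ r ∧
    ⌈(1 - δ) * (T.card : ℝ)⌉₊ ≤ (T.filter (fun j => ‖X j - X i‖ ≤ r)).card}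

/-- `θhat` is a trimmed mean `TM_δ((X_j)_{j∈T})`: for some `i* ∈ T` minimizing
the trimmed radius, `θhat` is the average of the points indexed by an
`⌈(1−δ)N⌉`-element subset `V` of `{j ∈ T : ‖X_j − X_{i*}‖ ≤ R_{i*}}`. -/
def IsTrimmedMean {ι : Type*} {d : ℕ} (δ : ℝ) (T : Finset ι)
    (X : ι → EuclideanSpace ℝ (Fin d)) (θhat : EuclideanSpace ℝ (Fin d)) : Prop :=
  ∃ istar ∈ T,
    (∀ j ∈ T, trimRadius δ T X istar ≤ trimRadius δ T X j) ∧
    ∃ V : Finset ι,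
      V ⊆ T.filter (fun j => ‖X j - X istar‖ ≤ trimRadius δ T X istar) ∧
      V.card = ⌈(1 - δ) * (T.card : ℝ)⌉₊ ∧
      θhat = ((⌈(1 - δ) * (T.card : ℝ)⌉₊ : ℝ))⁻¹ • ∑ j ∈ V, X j

lemma TM_numeric (n : ℕ) (x s : ℝ) (hx0 : 0 < x) (hx2 : x ≤ 1/2)
    (hxn : 10 < x * n) (hs : 2/x + 2 ≤ s) :
    (n.choose ⌊3*x*(n:ℝ)/8⌋₊ : ℝ) * Real.exp (-s) ^ ⌊3*x*(n:ℝ)/8⌋₊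
      ≤ Real.exp (-(0.3:ℝ)*n) := by
  have hn0 : (0:ℝ) < n := by nlinarith
  set c : ℝ := 3*x*(n:ℝ)/8 with hc
  have hc375 : (3.75:ℝ) < c := by rw [hc]; nlinarith
  have hc0 : 0 < c := by linarith
  set m : ℕ := ⌊c⌋₊ with hm
  have hm_le : (m:ℝ) ≤ c := Nat.floor_le hc0.le
  have hm_gt : c - 1 < (m:ℝ) := by
    have := Nat.lt_floor_add_one c; linarith
  have hm_lb : 11*x*(n:ℝ)/40 ≤ (m:ℝ) := by nlinarith [hm_gt, hc375]
  have hmR : (0:ℝ) < (m:ℝ) := by linarith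
  have hm0 : 0 < m := by exact_mod_cast hmR
  have hmn : (m:ℝ) ≤ (n:ℝ) := by rw [hc] at hm_le; nlinarith
  -- binomial coefficient bound
  have h1 : (n.choose m : ℝ) ≤ (n:ℝ)^m / (m.factorial : ℝ) := by
    have := Nat.choose_le_pow_div (α := ℝ) m n
    push_cast at this ⊢
    exact this
  have h2 : (m:ℝ)^m / (m.factorial : ℝ) ≤ Real.exp m :=
    Real.pow_div_factorial_le_exp ((m:ℝ)) (by positivity) m
  have hfac : (0:ℝ) < (m.factorial : ℝ) := by
    exact_mod_cast m.factorial_pos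
  have hnm : (n:ℝ)^m = ((n:ℝ)/m)^m * (m:ℝ)^m := by
    rw [← mul_pow, div_mul_cancel₀ _ hmR.ne']
  have h3 : (n:ℝ)^m / (m.factorial:ℝ) ≤ ((n:ℝ)/m)^m * Real.exp m := by
    rw [hnm, mul_div_assoc]
    exact mul_le_mul_of_nonneg_left h2 (by positivity)
  have hnm_pos : 0 < (n:ℝ)/m := by positivity
  have h4 : ((n:ℝ)/m)^m = Real.exp ((m:ℝ) * Real.log ((n:ℝ)/m)) := by
    rw [Real.exp_nat_mul, Real.exp_log hnm_pos]
  have hlog : Real.log ((n:ℝ)/m) ≤ (n:ℝ)/m * Real.exp (-2) + 1 := by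
    have h5 : 0 < (n:ℝ)/m * Real.exp (-2) := by positivity
    have h6 := Real.log_le_sub_one_of_pos h5
    rw [Real.log_mul (ne_of_gt hnm_pos) (Real.exp_ne_zero _), Real.log_exp] at h6
    linarith
  have hexp2 : Real.exp (-2:ℝ) ≤ 1/4 := by
    have h7 : (4:ℝ) ≤ Real.exp 2 := by
      have := Real.quadratic_le_exp_of_nonneg (x := 2) (by norm_num)
      nlinarith
    rw [Real.exp_neg, inv_le_comm₀ (Real.exp_pos 2) (by norm_num : (0:ℝ) < 1/4)]
    norm_num
    linarith
  -- key exponent inequality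
  have hkey : (m:ℝ) * Real.log ((n:ℝ)/m) + (m:ℝ) + (m:ℝ)*(-s) ≤ -(0.3:ℝ)*n := by
    have h6 : (m:ℝ) * Real.log ((n:ℝ)/m) ≤ (n:ℝ) * Real.exp (-2) + m := by
      have := mul_le_mul_of_nonneg_left hlog hmR.le
      have heq : (m:ℝ) * ((n:ℝ)/m * Real.exp (-2) + 1) = (n:ℝ)*Real.exp (-2) + m := by
        field_simp
      rw [heq] at this
      linarith
    have h7 : (n:ℝ)*Real.exp (-2) ≤ (n:ℝ)/4 := by nlinarith [hexp2, hn0, Real.exp_pos (-2:ℝ)]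
    have h8 : 2*(m:ℝ)*x⁻¹ + 2*(m:ℝ) ≤ s*(m:ℝ) := by
      have hmul := mul_le_mul_of_nonneg_right hs hmR.le
      have hre : (2/x + 2)*(m:ℝ) = 2*(m:ℝ)*x⁻¹ + 2*(m:ℝ) := by ring
      rw [hre] at hmul
      exact hmul
    have h9 : (0.55:ℝ)*(n:ℝ) ≤ 2*(m:ℝ)*x⁻¹ := by
      rw [show 2*(m:ℝ)*x⁻¹ = 2*(m:ℝ)/x from by ring, le_div_iff₀ hx0]
      nlinarith [hm_lb]
    linarith [h6, h7, h8, h9]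
  calc (n.choose m : ℝ) * Real.exp (-s) ^ m
      ≤ (((n:ℝ)/m)^m * Real.exp m) * Real.exp (-s) ^ m := by
        apply mul_le_mul_of_nonneg_right (h1.trans h3) (by positivity)
    _ = Real.exp ((m:ℝ) * Real.log ((n:ℝ)/m) + (m:ℝ) + (m:ℝ)*(-s)) := by
        rw [h4, ← Real.exp_nat_mul, ← Real.exp_add, ← Real.exp_add]
    _ ≤ Real.exp (-(0.3:ℝ)*n) := Real.exp_le_exp.mpr hkey

lemma TM_det {k n d : ℕ} {α γ δ D : ℝ}
    (hnα : (0:ℝ) < (n:ℝ) * α)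
    (hγ0 : 0 < γ) (hγ2 : γ < 1/2)
    (hδ1 : 1/2 - γ/4 < δ) (hδ2 : δ < 1/2) (hD : 0 ≤ D)
    (z : Fin n → Fin k) (θ : Fin k → EuclideanSpace ℝ (Fin d))
    (u : Fin n → EuclideanSpace ℝ (Fin d))
    (h : Fin k)
    (hsz : (n:ℝ)*α ≤ ((Finset.univ.filter (fun i => z i = h)).card : ℝ))
    (hbad : (((Finset.univ.filter (fun i : Fin n => D < ‖u i‖)).card : ℝ)) + 1
        ≤ 3*(γ*α)*(n:ℝ)/8)
    (zhat : Fin n → Fin k)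
    (hover : (1/2+γ) * max ((Finset.univ.filter (fun i => z i = h)).card : ℝ)
        ((Finset.univ.filter (fun i => zhat i = h)).card : ℝ)
        ≤ ((Finset.univ.filter (fun i => z i = h ∧ zhat i = h)).card : ℝ))
    (θhat : EuclideanSpace ℝ (Fin d))
    (htm : IsTrimmedMean δ (Finset.univ.filter (fun i => zhat i = h))
        (fun j => θ (z j) + u j) θhat) :
    ‖θhat - θ h‖ ≤ 8 * D := by
  classical
  set X : Fin n → EuclideanSpace ℝ (Fin d) := fun j => θ (z j) + u j with hX
  set T : Finset (Fin n) := Finset.univ.filter (fun i => zhat i = h) with hT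
  set Tstar : Finset (Fin n) := Finset.univ.filter (fun i => z i = h) with hTstar
  set I : Finset (Fin n) := Finset.univ.filter (fun i => z i = h ∧ zhat i = h) with hI
  set Good : Finset (Fin n) :=
    Finset.univ.filter (fun i => (z i = h ∧ zhat i = h) ∧ ‖u i‖ ≤ D) with hGood
  set B : Finset (Fin n) := Finset.univ.filter (fun i : Fin n => D < ‖u i‖) with hB
  have hIT : I ⊆ T := fun i hi => mem_filter.mpr ⟨mem_univ _, (mem_filter.mp hi).2.2⟩
  have hGI : Good ⊆ I := fun i hi => mem_filter.mpr ⟨mem_univ _, (mem_filter.mp hi).2.1⟩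
  have hGT : Good ⊆ T := hGI.trans hIT
  have hIGB : I.card ≤ Good.card + B.card := by
    refine (card_le_card (fun i hi => ?_)).trans (card_union_le Good B)
    rcases le_or_gt ‖u i‖ D with hle | hlt
    · exact mem_union_left _ (mem_filter.mpr ⟨mem_univ _, (mem_filter.mp hi).2, hle⟩)
    · exact mem_union_right _ (mem_filter.mpr ⟨mem_univ _, hlt⟩)
  have hmaxN : (1/2+γ) * (T.card:ℝ) ≤ (I.card:ℝ) :=
    le_trans (mul_le_mul_of_nonneg_left (le_max_right _ _) (by linarith)) hover
  have hmaxS : (1/2+γ) * ((Tstar.card:ℝ)) ≤ (I.card:ℝ) :=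
    le_trans (mul_le_mul_of_nonneg_left (le_max_left _ _) (by linarith)) hover
  have hIN : (I.card : ℝ) ≤ (T.card:ℝ) := Nat.cast_le.mpr (card_le_card hIT)
  have hNa : (n:ℝ)*α/2 ≤ (T.card:ℝ) := by nlinarith [hsz, hmaxS, hIN, hnα]
  have hN0R : (0:ℝ) < (T.card:ℝ) := by linarith
  have hδN0 : 0 < (1-δ)*(T.card:ℝ) := by nlinarith
  have hM1 : 1 ≤ ⌈(1-δ)*(T.card:ℝ)⌉₊ := Nat.ceil_pos.mpr hδN0
  have hMleR : ((⌈(1-δ)*(T.card:ℝ)⌉₊:ℝ)) < (1-δ)*(T.card:ℝ) + 1 := Nat.ceil_lt_add_one hδN0.le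
  have hMgeR : (1-δ)*(T.card:ℝ) ≤ ((⌈(1-δ)*(T.card:ℝ)⌉₊:ℝ)) := Nat.le_ceil _
  have hBN : (B.card:ℝ) + 1 ≤ 3*γ/4*(T.card:ℝ) := by nlinarith [hbad, hNa, hγ0]
  have hMGood : ((⌈(1-δ)*(T.card:ℝ)⌉₊:ℝ)) < (Good.card:ℝ) := by
    have hIG : (I.card:ℝ) ≤ (Good.card:ℝ) + (B.card:ℝ) := by exact_mod_cast hIGB
    nlinarith [hMleR, hmaxN, hIG, hBN, hN0R, hδ1]
  have hMGoodN : ⌈(1-δ)*(T.card:ℝ)⌉₊ ≤ Good.card := (Nat.cast_lt.mp hMGood).le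
  have hN2M : (T.card:ℝ) < 2*((⌈(1-δ)*(T.card:ℝ)⌉₊:ℝ)) := by nlinarith
  obtain ⟨istar, histar, hmin, V, hVsub, hVcard, hθeq⟩ := htm
  obtain ⟨i0, hi0⟩ := card_pos.mp (lt_of_lt_of_le hM1 hMGoodN)
  have hXgood : ∀ j ∈ Good, ‖X j - θ h‖ ≤ D := by
    intro j hj
    obtain ⟨-, ⟨hzj, -⟩, hnj⟩ := mem_filter.mp hj
    show ‖θ (z j) + u j - θ h‖ ≤ D
    rw [hzj]
    simpa using hnj
  have hGsub : Good ⊆ T.filter (fun j => ‖X j - X i0‖ ≤ 2*D) := by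
    intro j hj
    refine mem_filter.mpr ⟨hGT hj, ?_⟩
    have h1 := hXgood j hj
    have h2 := hXgood i0 hi0
    calc ‖X j - X i0‖ = ‖(X j - θ h) - (X i0 - θ h)‖ := by congr 1; abel
      _ ≤ ‖X j - θ h‖ + ‖X i0 - θ h‖ := norm_sub_le _ _
      _ ≤ 2*D := by linarith
  have hmem2D : (2*D) ∈ {r : ℝ | 0 ≤ r ∧
      ⌈(1 - δ) * (T.card : ℝ)⌉₊ ≤ (T.filter (fun j => ‖X j - X i0‖ ≤ r)).card} :=
    ⟨by linarith, hMGoodN.trans (card_le_card hGsub)⟩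
  have hRi0 : trimRadius δ T X i0 ≤ 2*D :=
    csInf_le ⟨0, fun r hr => hr.1⟩ hmem2D
  have hRle : trimRadius δ T X istar ≤ 2*D := le_trans (hmin i0 (hGT hi0)) hRi0
  have hR0 : 0 ≤ trimRadius δ T X istar := by
    have hTne : T.Nonempty := card_pos.mp (by exact_mod_cast hN0R)
    have hne : {r : ℝ | 0 ≤ r ∧
        ⌈(1 - δ) * (T.card : ℝ)⌉₊ ≤ (T.filter (fun j => ‖X j - X istar‖ ≤ r)).card}.Nonempty := by
      refine ⟨max (2*D) (T.sup' hTne (fun j => ‖X j - X istar‖)),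
        le_trans (by linarith) (le_max_left _ _), ?_⟩
      refine hMGoodN.trans (card_le_card (fun j hj => mem_filter.mpr ⟨hGT hj, ?_⟩))
      exact le_trans (Finset.le_sup' (fun j => ‖X j - X istar‖) (hGT hj)) (le_max_right _ _)
    exact le_csInf hne (fun r hr => hr.1)
  -- find a good point in V
  have hVT : V ⊆ T := hVsub.trans (filter_subset _ _)
  have hVGood : 0 < (V ∩ Good).card := by
    have h1 : ((V ∪ Good).card:ℝ) ≤ (T.card:ℝ) :=
      Nat.cast_le.mpr (card_le_card (union_subset hVT hGT))
    have h2 := card_union_add_card_inter V Good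
    have h2R : ((V ∪ Good).card:ℝ) + ((V ∩ Good).card:ℝ) = (V.card:ℝ) + (Good.card:ℝ) := by
      exact_mod_cast congrArg (Nat.cast (R := ℝ)) h2
    have h3 : (V.card:ℝ) = ((⌈(1-δ)*(T.card:ℝ)⌉₊:ℝ)) := by exact_mod_cast hVcard
    have : (0:ℝ) < ((V ∩ Good).card:ℝ) := by nlinarith
    exact_mod_cast this
  obtain ⟨j0, hj0⟩ := card_pos.mp hVGood
  have hj0V : j0 ∈ V := (mem_inter.mp hj0).1
  have hj0G : j0 ∈ Good := (mem_inter.mp hj0).2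
  have hj0R : ‖X j0 - X istar‖ ≤ trimRadius δ T X istar := (mem_filter.mp (hVsub hj0V)).2
  have histar3 : ‖X istar - θ h‖ ≤ 3*D := by
    have h1 := hXgood j0 hj0G
    calc ‖X istar - θ h‖ = ‖-(X j0 - X istar) + (X j0 - θ h)‖ := by congr 1; abel
      _ ≤ ‖-(X j0 - X istar)‖ + ‖X j0 - θ h‖ := norm_add_le _ _
      _ = ‖X j0 - X istar‖ + ‖X j0 - θ h‖ := by rw [norm_neg]
      _ ≤ 3*D := by linarith
  have hVnorm : ∀ j ∈ V, ‖X j - θ h‖ ≤ 5*D := by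
    intro j hj
    have h1 : ‖X j - X istar‖ ≤ trimRadius δ T X istar := (mem_filter.mp (hVsub hj)).2
    calc ‖X j - θ h‖ = ‖(X j - X istar) + (X istar - θ h)‖ := by congr 1; abel
      _ ≤ ‖X j - X istar‖ + ‖X istar - θ h‖ := norm_add_le _ _
      _ ≤ 5*D := by linarith
  have hMne : ((⌈(1-δ)*(T.card:ℝ)⌉₊:ℝ)) ≠ 0 := by positivity
  have hsplit : θhat - θ h = ((⌈(1-δ)*(T.card:ℝ)⌉₊:ℝ))⁻¹ • ∑ j ∈ V, (X j - θ h) := by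
    rw [hθeq, Finset.sum_sub_distrib, Finset.sum_const, hVcard, smul_sub]
    congr 1
    rw [← Nat.cast_smul_eq_nsmul ℝ, smul_smul, inv_mul_cancel₀ hMne, one_smul]
  rw [hsplit, norm_smul]
  have hsum : ‖∑ j ∈ V, (X j - θ h)‖ ≤ ((⌈(1-δ)*(T.card:ℝ)⌉₊:ℝ)) * (5*D) := by
    calc ‖∑ j ∈ V, (X j - θ h)‖ ≤ ∑ j ∈ V, ‖X j - θ h‖ := norm_sum_le _ _
      _ ≤ ∑ _j ∈ V, 5*D := Finset.sum_le_sum hVnorm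
      _ = (V.card:ℝ) * (5*D) := by rw [Finset.sum_const, nsmul_eq_mul]
      _ = ((⌈(1-δ)*(T.card:ℝ)⌉₊:ℝ)) * (5*D) := by rw [hVcard]
  have hMpos : (0:ℝ) < ((⌈(1-δ)*(T.card:ℝ)⌉₊:ℝ)) := by positivity
  have hinv : ‖(((⌈(1-δ)*(T.card:ℝ)⌉₊:ℝ)))⁻¹‖ = (((⌈(1-δ)*(T.card:ℝ)⌉₊:ℝ)))⁻¹ := by
    rw [Real.norm_eq_abs, abs_of_pos (by positivity)]
  rw [hinv]
  calc (((⌈(1-δ)*(T.card:ℝ)⌉₊:ℝ)))⁻¹ * ‖∑ j ∈ V, (X j - θ h)‖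
      ≤ (((⌈(1-δ)*(T.card:ℝ)⌉₊:ℝ)))⁻¹ * (((⌈(1-δ)*(T.card:ℝ)⌉₊:ℝ)) * (5*D)) := by
        exact mul_le_mul_of_nonneg_left hsum (by positivity)
    _ = 5*D := by field_simp
    _ ≤ 8*D := by linarith

/-- Uniform centroid-estimation guarantee for the trimmed mean (Proposition
`Lambda-bound` combined with the norm-concentration event of the paper): with
probability at least `1 − e^{−0.3n}`, for every partition `T₁,…,T_k` of
`{1,…,n}` (encoded by the label map `ẑ`) with
`|T_h ∩ T_h*| ≥ (1/2 + γ)·max(|T_h*|, |T_h|)` for every `h`, every trimmed mean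
`θ̂_h = TM_δ((Y_j)_{j ∈ T_h})` satisfies `‖θ̂_h − θ_h‖ ≤ 8D`. -/
theorem trimmed_mean_uniform_centroid_bound
    (k n d : ℕ) (hk : 1 ≤ k) (hn : 1 ≤ n) (hd : 1 ≤ d)
    (α γ τ δ D : ℝ) (hα : α ∈ Set.Ioc (0 : ℝ) 1)
    (hγ : γ ∈ Set.Ioo (10 / (n * α)) (1 / 2))
    (hτ : τ = γ / (1 + 2 * γ))
    (hδ : δ ∈ Set.Ioo (1 / 2 - γ / 4) (1 / 2)) (hD : 0 ≤ D)
    (z : Fin n → Fin k)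
    (hsize : ∀ h : Fin k,
      (n : ℝ) * α ≤ ((Finset.univ.filter (fun i => z i = h)).card : ℝ))
    (θ : Fin k → EuclideanSpace ℝ (Fin d))
    (Ω : Type*) [MeasureSpace Ω] [IsProbabilityMeasure (ℙ : Measure Ω)]
    (w : Fin n → Ω → EuclideanSpace ℝ (Fin d))
    (hmeas : ∀ i, Measurable (w i))
    (hindep : iIndepFun w ℙ)
    (htail : ∀ i, (ℙ {ω | D < ‖w i ω‖}).toReal ≤ Real.exp (-(1 + 2 / α) / τ)) :
    1 - Real.exp (-(0.3 : ℝ) * n)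
      ≤ (ℙ {ω | ∀ zhat : Fin n → Fin k,
            (∀ h : Fin k,
              (1 / 2 + γ) * max ((Finset.univ.filter (fun i => z i = h)).card : ℝ)
                  ((Finset.univ.filter (fun i => zhat i = h)).card : ℝ)
                ≤ ((Finset.univ.filter (fun i => z i = h ∧ zhat i = h)).card : ℝ)) →
            ∀ h : Fin k, ∀ θhat : EuclideanSpace ℝ (Fin d),
              IsTrimmedMean δ (Finset.univ.filter (fun i => zhat i = h))
                (fun j => θ (z j) + w j ω) θhat →
              ‖θhat - θ h‖ ≤ 8 * D}).toReal := by
  classical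
  obtain ⟨hα0, hα1⟩ := hα
  obtain ⟨hγlb, hγ2⟩ := hγ
  obtain ⟨hδ1, hδ2⟩ := hδ
  have hn1 : (1:ℝ) ≤ (n:ℝ) := by exact_mod_cast hn
  have hnα : (0:ℝ) < (n:ℝ) * α := by nlinarith
  have hγ0 : 0 < γ := lt_trans (by positivity) hγlb
  have hx0 : 0 < γ * α := by positivity
  have hx2 : γ * α ≤ 1/2 := by nlinarith
  have hxn : 10 < (γ*α) * (n:ℝ) := by
    rw [div_lt_iff₀ hnα] at hγlb
    nlinarith
  set s : ℝ := (1 + 2/α)/τ with hs_def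
  have h2γ : (0:ℝ) < 1 + 2*γ := by linarith
  have hseq : s = 1/γ + 2 + 2/(α*γ) + 4/α := by
    rw [hs_def, hτ]
    field_simp
    ring
  have hs : 2/(γ*α) + 2 ≤ s := by
    have h1 : (0:ℝ) < 1/γ := by positivity
    have h2 : (0:ℝ) < 4/α := by positivity
    have h3 : 2/(γ*α) = 2/(α*γ) := by rw [mul_comm]
    rw [hseq, h3]
    linarith
  set m : ℕ := ⌊3*(γ*α)*(n:ℝ)/8⌋₊ with hm_def
  set A : Set (EuclideanSpace ℝ (Fin d)) := {v | D < ‖v‖} with hA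
  have hAmeas : MeasurableSet A := (isOpen_lt continuous_const continuous_norm).measurableSet
  set U : Set Ω := ⋃ S ∈ Finset.powersetCard m (Finset.univ : Finset (Fin n)),
      ⋂ i ∈ S, w i ⁻¹' A with hU
  have hUmeas : MeasurableSet U :=
    Finset.measurableSet_biUnion _ (fun S _ =>
      Finset.measurableSet_biInter _ (fun i _ => hmeas i hAmeas))
  have htail' : ∀ i : Fin n, ℙ (w i ⁻¹' A) ≤ ENNReal.ofReal (Real.exp (-s)) := by
    intro i
    have h1 : (ℙ (w i ⁻¹' A)).toReal ≤ Real.exp (-s) := by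
      have h2 := htail i
      rw [neg_div] at h2
      exact h2
    rw [← ENNReal.ofReal_toReal (measure_ne_top ℙ (w i ⁻¹' A))]
    exact ENNReal.ofReal_le_ofReal h1
  have hUbound : ℙ U ≤ ENNReal.ofReal (Real.exp (-(0.3:ℝ)*n)) := by
    calc ℙ U ≤ ∑ S ∈ Finset.powersetCard m (Finset.univ : Finset (Fin n)),
          ℙ (⋂ i ∈ S, w i ⁻¹' A) := measure_biUnion_finset_le _ _
      _ ≤ ∑ _S ∈ Finset.powersetCard m (Finset.univ : Finset (Fin n)),
          ENNReal.ofReal (Real.exp (-s) ^ m) := by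
          refine Finset.sum_le_sum (fun S hS => ?_)
          rw [hindep.measure_inter_preimage_eq_mul S (fun i _ => hAmeas)]
          have hScard : S.card = m := (Finset.mem_powersetCard_univ).mp hS
          calc ∏ i ∈ S, ℙ (w i ⁻¹' A)
              ≤ ∏ _i ∈ S, ENNReal.ofReal (Real.exp (-s)) :=
                Finset.prod_le_prod' (fun i _ => htail' i)
            _ = ENNReal.ofReal (Real.exp (-s)) ^ m := by rw [Finset.prod_const, hScard]
            _ = ENNReal.ofReal (Real.exp (-s) ^ m) :=
                (ENNReal.ofReal_pow (Real.exp_pos _).le m).symm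
      _ = (n.choose m : ENNReal) * ENNReal.ofReal (Real.exp (-s) ^ m) := by
          rw [Finset.sum_const, Finset.card_powersetCard, Finset.card_univ,
            Fintype.card_fin, nsmul_eq_mul]
      _ = ENNReal.ofReal ((n.choose m : ℝ) * Real.exp (-s) ^ m) := by
          rw [ENNReal.ofReal_mul (by positivity), ENNReal.ofReal_natCast]
      _ ≤ ENNReal.ofReal (Real.exp (-(0.3:ℝ)*n)) := by
          exact ENNReal.ofReal_le_ofReal (TM_numeric n (γ*α) s hx0 hx2 hxn hs)
  have hsubset : Uᶜ ⊆ {ω | ∀ zhat : Fin n → Fin k,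
      (∀ h : Fin k,
        (1 / 2 + γ) * max ((Finset.univ.filter (fun i => z i = h)).card : ℝ)
            ((Finset.univ.filter (fun i => zhat i = h)).card : ℝ)
          ≤ ((Finset.univ.filter (fun i => z i = h ∧ zhat i = h)).card : ℝ)) →
      ∀ h : Fin k, ∀ θhat : EuclideanSpace ℝ (Fin d),
        IsTrimmedMean δ (Finset.univ.filter (fun i => zhat i = h))
          (fun j => θ (z j) + w j ω) θhat →
        ‖θhat - θ h‖ ≤ 8 * D} := by
    intro ω hω
    have hcount : (Finset.univ.filter (fun i : Fin n => D < ‖w i ω‖)).card < m := by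
      by_contra hge
      push_neg at hge
      apply hω
      obtain ⟨S, hSsub, hScard⟩ := Finset.exists_subset_card_eq hge
      rw [hU]
      simp only [Set.mem_iUnion, Set.mem_iInter]
      refine ⟨S, (Finset.mem_powersetCard_univ).mpr hScard, fun i hi => ?_⟩
      exact (Finset.mem_filter.mp (hSsub hi)).2
    intro zhat hover h θhat htm
    refine TM_det hnα hγ0 hγ2 hδ1 hδ2 hD z θ (fun j => w j ω) h (hsize h) ?_ zhat
      (hover h) θhat htm
    have h1 : ((Finset.univ.filter (fun i : Fin n => D < ‖w i ω‖)).card : ℝ) + 1 ≤ (m:ℝ) := by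
      exact_mod_cast Nat.succ_le_of_lt hcount
    refine h1.trans ?_
    exact Nat.floor_le (by positivity)
  have hcompl : ℙ Uᶜ = 1 - ℙ U := prob_compl_eq_one_sub hUmeas
  have hUreal : (ℙ U).toReal ≤ Real.exp (-(0.3:ℝ)*n) := by
    have h1 := ENNReal.toReal_mono ENNReal.ofReal_ne_top hUbound
    rwa [ENNReal.toReal_ofReal (Real.exp_nonneg _)] at h1
  have h2 : 1 - Real.exp (-(0.3:ℝ)*n) ≤ (ℙ Uᶜ).toReal := by
    rw [hcompl, ENNReal.toReal_sub_of_le prob_le_one ENNReal.one_ne_top, ENNReal.toReal_one]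
    linarith
  exact h2.trans (ENNReal.toReal_mono (measure_ne_top _ _) (measure_mono hsubset))
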